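/- With Σ as above and Σ⁻¹ its inverse (which exists since det(Σ) > 0 when p ∈ (0,1) and σ² > 0), the combination (Σ⁻¹)₁₁ + 2(Σ⁻¹)₁₂ + (Σ⁻¹)₂₂ equals (σ² + pΔ₂²) / (pσ²((1−p)Δ₁² + pΔ₂² + σ²)). -/

import Mathlib

open Matrix

/-- `(Σ⁻¹)₁₁ + 2(Σ⁻¹)₁₂ + (Σ⁻¹)₂₂` for the mixture covariance matrix. -/
theorem sigma_inv_combo1 (p σ2 Δ₁ Δ₂ : ℝ) (hp : p ∈ Set.Ioo (0 : ℝ) 1) (hσ : 0 < σ2)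
    (S : Matrix (Fin 2) (Fin 2) ℝ)
    (hS : S = !![σ2 + p * (1 - p) * (Δ₁ - Δ₂) ^ 2,
        p * σ2 + p * (1 - p) * (Δ₁ ^ 2 - Δ₁ * Δ₂);
        p * σ2 + p * (1 - p) * (Δ₁ ^ 2 - Δ₁ * Δ₂),
        p * σ2 + p * (1 - p) * Δ₁ ^ 2]) :
    S⁻¹ 0 0 + 2 * S⁻¹ 0 1 + S⁻¹ 1 1
      = (σ2 + p * Δ₂ ^ 2) / (p * σ2 * ((1 - p) * Δ₁ ^ 2 + p * Δ₂ ^ 2 + σ2)) := by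
  obtain ⟨hp0, hp1⟩ := hp
  have h1p : 0 < 1 - p := by linarith
  have hq : 0 < (1 - p) * Δ₁ ^ 2 + p * Δ₂ ^ 2 + σ2 := by positivity
  have hdet : S.det = p * (1 - p) * σ2 * ((1 - p) * Δ₁ ^ 2 + p * Δ₂ ^ 2 + σ2) := by
    subst hS
    rw [Matrix.det_fin_two_of]
    ring
  have hdne : S.det ≠ 0 := by
    rw [hdet]; positivity
  rw [Matrix.inv_def, Ring.inverse_eq_inv', hdet]
  subst hS
  simp only [Matrix.adjugate_fin_two_of, Matrix.smul_apply, smul_eq_mul,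
    Matrix.cons_val', Matrix.cons_val_zero, Matrix.cons_val_one, Matrix.head_cons,
    Matrix.empty_val', Matrix.cons_val_fin_one, Matrix.head_fin_const, Matrix.of_apply]
  have hne : p * (1 - p) * σ2 * ((1 - p) * Δ₁ ^ 2 + p * Δ₂ ^ 2 + σ2) ≠ 0 := by positivity
  field_simp
  ring
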